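/- Assume for every finite graph G, set A ⊆ G, vertices 0, b, the following gluing property: if a is the minimiser of P_G(a'↔b) over a'∈A, {v,w} is an edge, and P_G(x↔b) ≥ P_G(x↔A)·P_G(a↔b) for both x∈{v,w}, then P_{G⋒{v,w}}(v↔b) ≥ P_{G⋒{v,w}}(v↔A)·P_{G⋒{v,w}}(a↔b). Then for every finite graph G, set A, vertices 0, b: P_G(0↔b) ≥ P_G(0↔A)·min_{a∈A} P_G(a↔b). -/

import Mathlib

open scoped BigOperators

structure PercGraph (V E : Type) where
  ends : E → V × V
  p : E → ℝ

namespace PercGraph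

variable {V E : Type} [DecidableEq V] [Fintype E] [DecidableEq E]

/-- Weight of a configuration: each edge `e` is open (`ω e = true`) with probability `p e`. -/
def weight (G : PercGraph V E) (ω : E → Bool) : ℝ :=
  ∏ e, if ω e then G.p e else 1 - G.p e

/-- Probability of an event under the percolation measure. -/
noncomputable def prob (G : PercGraph V E) (S : Set (E → Bool)) : ℝ :=
  ∑ ω : E → Bool, Set.indicator S G.weight ω

/-- Expectation of a function under the percolation measure. -/
noncomputable def expec (G : PercGraph V E) (f : (E → Bool) → ℝ) : ℝ :=
  ∑ ω : E → Bool, f ω * G.weight ω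

/-- Two vertices are adjacent via an open edge in configuration `ω`. -/
def adj (G : PercGraph V E) (ω : E → Bool) (x y : V) : Prop :=
  ∃ e, ω e = true ∧ (G.ends e = (x, y) ∨ G.ends e = (y, x))

/-- `x` and `y` are connected by a path of open edges. -/
def Conn (G : PercGraph V E) (ω : E → Bool) (x y : V) : Prop :=
  Relation.ReflTransGen (G.adj ω) x y

/-- The union of the open clusters of the vertices of `A`. -/
def cluster (G : PercGraph V E) (ω : E → Bool) (A : Set V) : Set V :=
  {y | ∃ a ∈ A, G.Conn ω a y}

/-- The event `x ↔ y`. -/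
def connEvent (G : PercGraph V E) (x y : V) : Set (E → Bool) :=
  {ω | G.Conn ω x y}

/-- The event `x ↔ A`. -/
def connTo (G : PercGraph V E) (x : V) (A : Set V) : Set (E → Bool) :=
  {ω | ∃ a ∈ A, G.Conn ω x a}

/-- The event `A ↮ B`. -/
def disconn (G : PercGraph V E) (A B : Set V) : Set (E → Bool) :=
  {ω | ∀ a ∈ A, ∀ b ∈ B, ¬ G.Conn ω a b}

def IncreasingEvent (S : Set (E → Bool)) : Prop :=
  ∀ ⦃ω ω' : E → Bool⦄, (∀ e, ω e = true → ω' e = true) → ω ∈ S → ω' ∈ S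

def DecreasingEvent (S : Set (E → Bool)) : Prop :=
  ∀ ⦃ω ω' : E → Bool⦄, (∀ e, ω e = true → ω' e = true) → ω' ∈ S → ω ∈ S

def IncreasingFun (f : (E → Bool) → ℝ) : Prop :=
  ∀ ⦃ω ω' : E → Bool⦄, (∀ e, ω e = true → ω' e = true) → f ω ≤ f ω'

/-- `f` is determined by the cluster of `A`. -/
def ClusterDetermined (G : PercGraph V E) (A : Set V) (f : (E → Bool) → ℝ) : Prop :=
  ∀ ω ω', G.cluster ω A = G.cluster ω' A → f ω = f ω'

/-- The event `S` is determined by the cluster of `A`. -/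
def ClusterDeterminedEvent (G : PercGraph V E) (A : Set V) (S : Set (E → Bool)) : Prop :=
  ∀ ω ω', G.cluster ω A = G.cluster ω' A → (ω ∈ S ↔ ω' ∈ S)

noncomputable def condProb (G : PercGraph V E) (S T : Set (E → Bool)) : ℝ :=
  G.prob (S ∩ T) / G.prob T

noncomputable def condExpec (G : PercGraph V E) (f : (E → Bool) → ℝ) (T : Set (E → Bool)) : ℝ :=
  G.expec (T.indicator f) / G.prob T

/-- The edge `e` is incident to the vertex `x`. -/
def incident (G : PercGraph V E) (x : V) (e : E) : Prop :=
  (G.ends e).1 = x ∨ (G.ends e).2 = x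

/-- The other endpoint of an edge incident to `x`. -/
def otherEnd (G : PercGraph V E) (x : V) (e : E) : V :=
  if (G.ends e).1 = x then (G.ends e).2 else (G.ends e).1

/-- The graph `G ∖ W`: delete the vertices of `W` and all incident edges. -/
def delete (G : PercGraph V E) (W : Finset V) :
    PercGraph V {e : E // (G.ends e).1 ∉ W ∧ (G.ends e).2 ∉ W} :=
  ⟨fun e => G.ends e.1, fun e => G.p e.1⟩

/-- The graph `G` with the probability of edge `e` replaced by `q`. -/
def withEdgeProb (G : PercGraph V E) (e : E) (q : ℝ) : PercGraph V E :=
  ⟨G.ends, Function.update G.p e q⟩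

/-- Contraction of the edge `e`: set its probability to 1. -/
def contract (G : PercGraph V E) (e : E) : PercGraph V E :=
  G.withEdgeProb e 1

/-- The event that `e` is pivotal for `U`. -/
def pivotal (e : E) (U : Set (E → Bool)) : Set (E → Bool) :=
  {ω | ¬ ((Function.update ω e true ∈ U) ↔ (Function.update ω e false ∈ U))}

/-- All edge probabilities lie in `[0,1]`. -/
def ProbValid (G : PercGraph V E) : Prop := ∀ e, 0 ≤ G.p e ∧ G.p e ≤ 1

end PercGraph

namespace PercGraph

open Finset

variable {V E : Type} [DecidableEq V] [Fintype E] [DecidableEq E]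

/-- Rest weight: product over edges other than `e`. -/
def rest (G : PercGraph V E) (e : E) (ω : E → Bool) : ℝ :=
  ∏ e' ∈ Finset.univ.erase e, (if ω e' then G.p e' else 1 - G.p e')

lemma weight_eq_rest (G : PercGraph V E) (e : E) (ω : E → Bool) :
    G.weight ω = (if ω e then G.p e else 1 - G.p e) * G.rest e ω :=
  (Finset.mul_prod_erase _ _ (Finset.mem_univ e)).symm

lemma rest_wep (G : PercGraph V E) (e : E) (t : ℝ) (ω : E → Bool) :
    (G.withEdgeProb e t).rest e ω = G.rest e ω :=
  Finset.prod_congr rfl fun e' he' => by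
    show (if ω e' then Function.update G.p e t e' else 1 - Function.update G.p e t e') = _
    rw [Function.update_of_ne (Finset.ne_of_mem_erase he')]

lemma weight_wep (G : PercGraph V E) (e : E) (t : ℝ) (ω : E → Bool) :
    (G.withEdgeProb e t).weight ω = (if ω e then t else 1 - t) * G.rest e ω := by
  rw [weight_eq_rest _ e, rest_wep]
  congr 1
  show (if ω e then Function.update G.p e t e else 1 - Function.update G.p e t e) = _
  rw [Function.update_self]

lemma rest_update (G : PercGraph V E) (e : E) (ω : E → Bool) (b : Bool) :
    G.rest e (Function.update ω e b) = G.rest e ω :=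
  Finset.prod_congr rfl fun e' he' => by
    rw [Function.update_of_ne (Finset.ne_of_mem_erase he')]

lemma rest_nonneg (G : PercGraph V E) (hV : G.ProbValid) (e : E) (ω : E → Bool) :
    0 ≤ G.rest e ω :=
  Finset.prod_nonneg fun e' _ => by
    by_cases h : ω e'
    · simpa [h] using (hV e').1
    · simpa [h] using sub_nonneg.mpr (hV e').2

lemma weight_nonneg (G : PercGraph V E) (hV : G.ProbValid) (ω : E → Bool) :
    0 ≤ G.weight ω :=
  Finset.prod_nonneg fun e' _ => by
    by_cases h : ω e'
    · simpa [h] using (hV e').1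
    · simpa [h] using sub_nonneg.mpr (hV e').2

lemma prob_nonneg (G : PercGraph V E) (hV : G.ProbValid) (S : Set (E → Bool)) :
    0 ≤ G.prob S :=
  Finset.sum_nonneg fun ω _ => Set.indicator_nonneg (fun ω' _ => G.weight_nonneg hV ω') ω

lemma sum_weight (G : PercGraph V E) : ∑ ω : E → Bool, G.weight ω = 1 := by
  have h := Finset.prod_univ_sum (fun _ : E => (Finset.univ : Finset Bool))
      (fun e b => if b then G.p e else 1 - G.p e)
  rw [Fintype.piFinset_univ] at h
  unfold weight
  rw [← h]
  refine Finset.prod_eq_one fun e _ => ?_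
  simp

lemma prob_le_one (G : PercGraph V E) (hV : G.ProbValid) (S : Set (E → Bool)) :
    G.prob S ≤ 1 := by
  rw [← G.sum_weight]
  refine Finset.sum_le_sum fun ω _ => ?_
  by_cases h : ω ∈ S
  · rw [Set.indicator_of_mem h]
  · rw [Set.indicator_of_notMem h]; exact G.weight_nonneg hV ω

lemma probValid_wep (G : PercGraph V E) (hV : G.ProbValid) (e : E) {t : ℝ}
    (ht0 : 0 ≤ t) (ht1 : t ≤ 1) : (G.withEdgeProb e t).ProbValid := by
  intro e'
  show 0 ≤ Function.update G.p e t e' ∧ Function.update G.p e t e' ≤ 1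
  by_cases h : e' = e
  · subst h; rw [Function.update_self]; exact ⟨ht0, ht1⟩
  · rw [Function.update_of_ne h]; exact hV e'

lemma connEvent_wep (G : PercGraph V E) (e : E) (t : ℝ) (x y : V) :
    (G.withEdgeProb e t).connEvent x y = G.connEvent x y := rfl

lemma connTo_wep (G : PercGraph V E) (e : E) (t : ℝ) (x : V) (A : Set V) :
    (G.withEdgeProb e t).connTo x A = G.connTo x A := rfl

lemma wep_self (G : PercGraph V E) (e : E) : G.withEdgeProb e (G.p e) = G := by
  cases G
  unfold withEdgeProb
  simp [Function.update_eq_self]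

lemma contract_wep_zero (G : PercGraph V E) (e : E) :
    (G.withEdgeProb e 0).contract e = G.withEdgeProb e 1 := by
  cases G
  unfold contract withEdgeProb
  simp [Function.update_idem]

lemma prob_affine (G : PercGraph V E) (e : E) (t : ℝ) (S : Set (E → Bool)) :
    (G.withEdgeProb e t).prob S
      = (1 - t) * (G.withEdgeProb e 0).prob S + t * (G.withEdgeProb e 1).prob S := by
  unfold prob
  rw [Finset.mul_sum, Finset.mul_sum, ← Finset.sum_add_distrib]
  refine Finset.sum_congr rfl fun ω _ => ?_
  by_cases h : ω ∈ S
  · rw [Set.indicator_of_mem h, Set.indicator_of_mem h, Set.indicator_of_mem h,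
        weight_wep, weight_wep, weight_wep]
    by_cases hω : ω e <;> simp [hω] <;> ring
  · simp [Set.indicator_of_notMem h]

lemma prob_wep_mono (G : PercGraph V E) (hV : G.ProbValid) (e : E) {S : Set (E → Bool)}
    (hS : IncreasingEvent S) :
    (G.withEdgeProb e 0).prob S ≤ (G.withEdgeProb e 1).prob S := by
  have hV1 : (G.withEdgeProb e 1).ProbValid := G.probValid_wep hV e zero_le_one le_rfl
  have hinv : Function.Involutive (fun ω : E → Bool => Function.update ω e (!ω e)) := by
    intro ω
    simp [Function.update_idem, Function.update_self, Bool.not_not, Function.update_eq_self]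
  have hsum : (G.withEdgeProb e 0).prob S
      = ∑ ω : E → Bool,
          Set.indicator S (G.withEdgeProb e 0).weight (Function.update ω e (!ω e)) := by
    unfold prob
    exact (Equiv.sum_comp (hinv.toPerm _) _).symm
  rw [hsum]
  unfold prob
  refine Finset.sum_le_sum fun ω _ => ?_
  by_cases hω : ω e
  · by_cases hmem : Function.update ω e (!ω e) ∈ S
    · have hmem' : ω ∈ S := by
        refine hS (fun e' h' => ?_) hmem
        by_cases he' : e' = e
        · subst he'; rw [Function.update_self] at h'; rw [hω] at h'; simp at h'
        · rwa [Function.update_of_ne he'] at h'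
      rw [Set.indicator_of_mem hmem, Set.indicator_of_mem hmem',
          weight_wep, weight_wep, rest_update, Function.update_self]
      simp [hω]
    · rw [Set.indicator_of_notMem hmem]
      exact Set.indicator_nonneg (fun ω' _ => weight_nonneg _ hV1 ω') ω
  · have h0 : (G.withEdgeProb e 0).weight (Function.update ω e (!ω e)) = 0 := by
      rw [weight_wep, Function.update_self]
      simp [hω]
    have hL : Set.indicator S (G.withEdgeProb e 0).weight (Function.update ω e (!ω e)) = 0 := by
      by_cases hmem : Function.update ω e (!ω e) ∈ S
      · rw [Set.indicator_of_mem hmem, h0]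
      · rw [Set.indicator_of_notMem hmem]
    rw [hL]
    exact Set.indicator_nonneg (fun ω' _ => weight_nonneg _ hV1 ω') ω

lemma prob_contract_congr (G : PercGraph V E) (e : E) {S T : Set (E → Bool)}
    (h : ∀ ω : E → Bool, ω e = true → (ω ∈ S ↔ ω ∈ T)) :
    (G.withEdgeProb e 1).prob S = (G.withEdgeProb e 1).prob T := by
  unfold prob
  refine Finset.sum_congr rfl fun ω _ => ?_
  by_cases hω : ω e
  · by_cases hm : ω ∈ S
    · rw [Set.indicator_of_mem hm, Set.indicator_of_mem ((h ω hω).mp hm)]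
    · rw [Set.indicator_of_notMem hm, Set.indicator_of_notMem (fun hc => hm ((h ω hω).mpr hc))]
  · have h0 : (G.withEdgeProb e 1).weight ω = 0 := by
      rw [weight_wep]; simp [hω]
    have hz : ∀ (U : Set (E → Bool)), Set.indicator U (G.withEdgeProb e 1).weight ω = 0 := by
      intro U
      by_cases hm : ω ∈ U
      · rw [Set.indicator_of_mem hm, h0]
      · rw [Set.indicator_of_notMem hm]
    rw [hz, hz]

lemma conn_mono (G : PercGraph V E) {ω ω' : E → Bool} (hle : ∀ e, ω e = true → ω' e = true)
    {x y : V} (h : G.Conn ω x y) : G.Conn ω' x y :=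
  Relation.ReflTransGen.mono (r := G.adj ω) (p := G.adj ω') (fun a b hab => by
    obtain ⟨e, h1, h2⟩ := hab; exact ⟨e, hle e h1, h2⟩) x y h

lemma increasing_connEvent (G : PercGraph V E) (x y : V) :
    IncreasingEvent (G.connEvent x y) :=
  fun _ _ hle h => G.conn_mono hle h

lemma increasing_connTo (G : PercGraph V E) (x : V) (A : Set V) :
    IncreasingEvent (G.connTo x A) := by
  rintro ω ω' hle ⟨a, ha, h⟩
  exact ⟨a, ha, G.conn_mono hle h⟩

lemma conn_iff_of_edge (G : PercGraph V E) {e : E} {v w : V} (hends : G.ends e = (v, w))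
    {ω : E → Bool} (hω : ω e = true) (y : V) : G.Conn ω w y ↔ G.Conn ω v y := by
  constructor
  · exact fun h => Relation.ReflTransGen.head ⟨e, hω, Or.inl hends⟩ h
  · exact fun h => Relation.ReflTransGen.head ⟨e, hω, Or.inr hends⟩ h

lemma prob_connTo_eq_zero (G : PercGraph V E) {x₀ : V} {A : Finset V}
    (hx : x₀ ∉ A) (hiso : ∀ e, G.incident x₀ e → G.p e = 0) :
    G.prob (G.connTo x₀ ↑A) = 0 := by
  unfold prob
  refine Finset.sum_eq_zero fun ω _ => ?_
  by_cases hm : ω ∈ G.connTo x₀ ↑A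
  · rw [Set.indicator_of_mem hm]
    obtain ⟨a, haA, hconn⟩ := hm
    rcases Relation.ReflTransGen.cases_head hconn with heq | ⟨c, ⟨e, hωe, hends⟩, -⟩
    · exact absurd (by rw [heq]; exact_mod_cast haA) hx
    · have hpe : G.p e = 0 := by
        refine hiso e ?_
        rcases hends with h | h
        · exact Or.inl (by rw [h])
        · exact Or.inr (by rw [h])
      unfold weight
      refine Finset.prod_eq_zero (Finset.mem_univ e) ?_
      rw [hωe, if_pos rfl, hpe]
  · rw [Set.indicator_of_notMem hm]

def GluingHyp : Prop :=
  ∀ (V E : Type) [DecidableEq V] [Fintype E] [DecidableEq E]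
      (G : PercGraph V E), G.ProbValid → ∀ (A : Finset V), A.Nonempty →
      ∀ (b v w : V) (e : E), G.ends e = (v, w) →
      ∀ a ∈ A, (∀ a' ∈ A, G.prob (G.connEvent a b) ≤ G.prob (G.connEvent a' b)) →
      (∀ x ∈ ({v, w} : Set V),
          G.prob (G.connTo x ↑A) * G.prob (G.connEvent a b)
            ≤ G.prob (G.connEvent x b)) →
      (G.contract e).prob ((G.contract e).connTo v ↑A) *
          (G.contract e).prob ((G.contract e).connEvent a b)
        ≤ (G.contract e).prob ((G.contract e).connEvent v b)

theorem aux (H : GluingHyp) :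
    ∀ (n : ℕ) {V E : Type} [DecidableEq V] [Fintype E] [DecidableEq E]
      (G : PercGraph V E), (Finset.univ.filter fun e => G.p e ≠ 0).card ≤ n →
      G.ProbValid → ∀ (A : Finset V) (hA : A.Nonempty) (x₀ b : V),
      G.prob (G.connTo x₀ ↑A) * A.inf' hA (fun a => G.prob (G.connEvent a b))
        ≤ G.prob (G.connEvent x₀ b) := by
  intro n
  induction n with
  | zero =>
    intro V E _ _ _ G hcard hV A hA x₀ b
    by_cases hx₀A : x₀ ∈ A
    · -- trivial case: x₀ ∈ A
      have hm_le : A.inf' hA (fun a => G.prob (G.connEvent a b))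
          ≤ G.prob (G.connEvent x₀ b) := Finset.inf'_le _ hx₀A
      have hm_nonneg : 0 ≤ A.inf' hA fun a => G.prob (G.connEvent a b) :=
        Finset.le_inf' hA _ fun a _ => G.prob_nonneg hV _
      calc G.prob (G.connTo x₀ ↑A) * A.inf' hA (fun a => G.prob (G.connEvent a b))
          ≤ 1 * A.inf' hA (fun a => G.prob (G.connEvent a b)) :=
            mul_le_mul_of_nonneg_right (G.prob_le_one hV _) hm_nonneg
        _ = _ := one_mul _
        _ ≤ _ := hm_le
    · have hall : ∀ e, G.p e = 0 := by
        intro e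
        by_contra hne
        have : e ∈ Finset.univ.filter fun e => G.p e ≠ 0 :=
          Finset.mem_filter.mpr ⟨Finset.mem_univ _, hne⟩
        have := Finset.card_pos.mpr ⟨e, this⟩
        omega
      have h0 : G.prob (G.connTo x₀ ↑A) = 0 :=
        G.prob_connTo_eq_zero hx₀A (fun e _ => hall e)
      rw [h0, zero_mul]
      exact G.prob_nonneg hV _
  | succ n ih =>
    intro V E _ _ _ G hcard hV A hA x₀ b
    by_cases hx₀A : x₀ ∈ A
    · have hm_le : A.inf' hA (fun a => G.prob (G.connEvent a b))
          ≤ G.prob (G.connEvent x₀ b) := Finset.inf'_le _ hx₀A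
      have hm_nonneg : 0 ≤ A.inf' hA fun a => G.prob (G.connEvent a b) :=
        Finset.le_inf' hA _ fun a _ => G.prob_nonneg hV _
      calc G.prob (G.connTo x₀ ↑A) * A.inf' hA (fun a => G.prob (G.connEvent a b))
          ≤ 1 * A.inf' hA (fun a => G.prob (G.connEvent a b)) :=
            mul_le_mul_of_nonneg_right (G.prob_le_one hV _) hm_nonneg
        _ = _ := one_mul _
        _ ≤ _ := hm_le
    by_cases hex : ∃ e, G.p e ≠ 0 ∧ G.incident x₀ e
    case neg =>
      have h0 : G.prob (G.connTo x₀ ↑A) = 0 :=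
        G.prob_connTo_eq_zero hx₀A (fun e hinc => by
          by_contra hne; exact hex ⟨e, hne, hinc⟩)
      rw [h0, zero_mul]
      exact G.prob_nonneg hV _
    case pos =>
    obtain ⟨e, hpe, hinc⟩ := hex
    have ht0 : (0:ℝ) ≤ G.p e := (hV e).1
    have ht1 : G.p e ≤ 1 := (hV e).2
    have hV0 : (G.withEdgeProb e 0).ProbValid := G.probValid_wep hV e le_rfl zero_le_one
    -- the number of nontrivial edges decreases
    have hcard0 : (Finset.univ.filter fun e' => (G.withEdgeProb e 0).p e' ≠ 0).card ≤ n := by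
      have hsub : (Finset.univ.filter fun e' => (G.withEdgeProb e 0).p e' ≠ 0)
          ⊆ (Finset.univ.filter fun e' => G.p e' ≠ 0).erase e := by
        intro e' he'
        rw [Finset.mem_filter] at he'
        have hne : e' ≠ e := by
          intro hcontra
          subst hcontra
          exact he'.2 (by show Function.update G.p e' 0 e' = 0; rw [Function.update_self])
        refine Finset.mem_erase.mpr ⟨hne, Finset.mem_filter.mpr ⟨Finset.mem_univ _, ?_⟩⟩
        have heq : (G.withEdgeProb e 0).p e' = G.p e' := by
          show Function.update G.p e 0 e' = G.p e'
          rw [Function.update_of_ne hne]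
        rw [← heq]
        exact he'.2
      have hmem : e ∈ Finset.univ.filter fun e' => G.p e' ≠ 0 :=
        Finset.mem_filter.mpr ⟨Finset.mem_univ _, hpe⟩
      have h1 := Finset.card_le_card hsub
      rw [Finset.card_erase_of_mem hmem] at h1
      have h2 := Finset.card_pos.mpr ⟨e, hmem⟩
      omega
    -- choose a : minimizer for G₀
    obtain ⟨a, haA, ha_eq⟩ := Finset.exists_mem_eq_inf' hA
      (fun a => (G.withEdgeProb e 0).prob ((G.withEdgeProb e 0).connEvent a b))
    have IH0 : ∀ x, (G.withEdgeProb e 0).prob (G.connTo x ↑A)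
        * (G.withEdgeProb e 0).prob (G.connEvent a b)
        ≤ (G.withEdgeProb e 0).prob (G.connEvent x b) := by
      intro x
      have h := ih (G.withEdgeProb e 0) hcard0 hV0 A hA x b
      rw [ha_eq] at h
      exact h
    have hmin : ∀ a' ∈ A, (G.withEdgeProb e 0).prob ((G.withEdgeProb e 0).connEvent a b)
        ≤ (G.withEdgeProb e 0).prob ((G.withEdgeProb e 0).connEvent a' b) := by
      intro a' ha'
      rw [← ha_eq]
      exact Finset.inf'_le _ ha'
    have hends : G.ends e = ((G.ends e).1, (G.ends e).2) := Prod.mk.eta.symm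
    have hH := H V E (G.withEdgeProb e 0) hV0 A hA b (G.ends e).1 (G.ends e).2 e hends a haA
      hmin (fun x _ => IH0 x)
    rw [contract_wep_zero] at hH
    have hH' : (G.withEdgeProb e 1).prob (G.connTo (G.ends e).1 ↑A)
        * (G.withEdgeProb e 1).prob (G.connEvent a b)
        ≤ (G.withEdgeProb e 1).prob (G.connEvent (G.ends e).1 b) := hH
    -- transfer from the endpoint to x₀
    have hB1 : (G.withEdgeProb e 1).prob (G.connTo x₀ ↑A)
        * (G.withEdgeProb e 1).prob (G.connEvent a b)
        ≤ (G.withEdgeProb e 1).prob (G.connEvent x₀ b) := by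
      rcases hinc with h1 | h1
      · rw [h1] at hH'; exact hH'
      · have hTb : (G.withEdgeProb e 1).prob (G.connEvent (G.ends e).2 b)
            = (G.withEdgeProb e 1).prob (G.connEvent (G.ends e).1 b) :=
          G.prob_contract_congr e fun ω hω => G.conn_iff_of_edge hends hω b
        have hTA : (G.withEdgeProb e 1).prob (G.connTo (G.ends e).2 ↑A)
            = (G.withEdgeProb e 1).prob (G.connTo (G.ends e).1 ↑A) := by
          refine G.prob_contract_congr e fun ω hω => ?_
          constructor
          · rintro ⟨a', ha', hc⟩
            exact ⟨a', ha', (G.conn_iff_of_edge hends hω a').mp hc⟩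
          · rintro ⟨a', ha', hc⟩
            exact ⟨a', ha', (G.conn_iff_of_edge hends hω a').mpr hc⟩
        have : (G.withEdgeProb e 1).prob (G.connTo (G.ends e).2 ↑A)
            * (G.withEdgeProb e 1).prob (G.connEvent a b)
            ≤ (G.withEdgeProb e 1).prob (G.connEvent (G.ends e).2 b) := by
          rw [hTA, hTb]; exact hH'
        rw [h1] at this
        exact this
    have hB0 : (G.withEdgeProb e 0).prob (G.connTo x₀ ↑A)
        * (G.withEdgeProb e 0).prob (G.connEvent a b)
        ≤ (G.withEdgeProb e 0).prob (G.connEvent x₀ b) := IH0 x₀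
    -- monotonicity
    have hC01 : (G.withEdgeProb e 0).prob (G.connTo x₀ ↑A)
        ≤ (G.withEdgeProb e 1).prob (G.connTo x₀ ↑A) :=
      G.prob_wep_mono hV e (G.increasing_connTo x₀ ↑A)
    have hD01 : (G.withEdgeProb e 0).prob (G.connEvent a b)
        ≤ (G.withEdgeProb e 1).prob (G.connEvent a b) :=
      G.prob_wep_mono hV e (G.increasing_connEvent a b)
    have hC0 : 0 ≤ (G.withEdgeProb e 0).prob (G.connTo x₀ ↑A) := prob_nonneg _ hV0 _
    have hD0 : 0 ≤ (G.withEdgeProb e 0).prob (G.connEvent a b) := prob_nonneg _ hV0 _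
    -- affine decompositions
    have hB : G.prob (G.connEvent x₀ b)
        = (1 - G.p e) * (G.withEdgeProb e 0).prob (G.connEvent x₀ b)
          + G.p e * (G.withEdgeProb e 1).prob (G.connEvent x₀ b) := by
      have h := G.prob_affine e (G.p e) (G.connEvent x₀ b)
      rwa [G.wep_self e] at h
    have hC : G.prob (G.connTo x₀ ↑A)
        = (1 - G.p e) * (G.withEdgeProb e 0).prob (G.connTo x₀ ↑A)
          + G.p e * (G.withEdgeProb e 1).prob (G.connTo x₀ ↑A) := by
      have h := G.prob_affine e (G.p e) (G.connTo x₀ ↑A)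
      rwa [G.wep_self e] at h
    have hD : G.prob (G.connEvent a b)
        = (1 - G.p e) * (G.withEdgeProb e 0).prob (G.connEvent a b)
          + G.p e * (G.withEdgeProb e 1).prob (G.connEvent a b) := by
      have h := G.prob_affine e (G.p e) (G.connEvent a b)
      rwa [G.wep_self e] at h
    have key : G.prob (G.connTo x₀ ↑A) * G.prob (G.connEvent a b)
        ≤ G.prob (G.connEvent x₀ b) := by
      rw [hB, hC, hD]
      nlinarith [hB0, hB1, hC01, hD01, hC0, hD0, ht0, ht1,
        mul_nonneg (mul_nonneg ht0 (sub_nonneg.mpr ht1))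
          (mul_nonneg (sub_nonneg.mpr hC01) (sub_nonneg.mpr hD01))]
    have hm_le : A.inf' hA (fun a' => G.prob (G.connEvent a' b)) ≤ G.prob (G.connEvent a b) :=
      Finset.inf'_le _ haA
    calc G.prob (G.connTo x₀ ↑A) * A.inf' hA (fun a' => G.prob (G.connEvent a' b))
        ≤ G.prob (G.connTo x₀ ↑A) * G.prob (G.connEvent a b) :=
          mul_le_mul_of_nonneg_left hm_le (G.prob_nonneg hV _)
      _ ≤ _ := key
end PercGraph

/-- if the gluing (contraction) property holds for all finite graphs,
then the post-FKG conjecture `P(0↔b) ≥ P(0↔A)·min_{a∈A} P(a↔b)` holds for all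
finite graphs. -/
theorem postFKG_of_gluing
    (H : ∀ (V E : Type) [DecidableEq V] [Fintype E] [DecidableEq E]
        (G : PercGraph V E), G.ProbValid → ∀ (A : Finset V), A.Nonempty →
        ∀ (b v w : V) (e : E), G.ends e = (v, w) →
        ∀ a ∈ A, (∀ a' ∈ A, G.prob (G.connEvent a b) ≤ G.prob (G.connEvent a' b)) →
        (∀ x ∈ ({v, w} : Set V),
            G.prob (G.connTo x ↑A) * G.prob (G.connEvent a b)
              ≤ G.prob (G.connEvent x b)) →
        (G.contract e).prob ((G.contract e).connTo v ↑A) *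
            (G.contract e).prob ((G.contract e).connEvent a b)
          ≤ (G.contract e).prob ((G.contract e).connEvent v b)) :
    ∀ (V E : Type) [DecidableEq V] [Fintype E] [DecidableEq E]
      (G : PercGraph V E), G.ProbValid →
      ∀ (A : Finset V) (hA : A.Nonempty) (x₀ b : V),
      G.prob (G.connTo x₀ ↑A) * A.inf' hA (fun a => G.prob (G.connEvent a b))
        ≤ G.prob (G.connEvent x₀ b) := by
  intro V E _ _ _ G hV A hA x₀ b
  exact PercGraph.aux H _ G le_rfl hV A hA x₀ b
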